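/- Let p be an odd prime and let t, r be integers with t ≥ 1 and 0 ≤ r < 2t. Let a_t = diag(p^{−t}, p^t) ∈ GL₂(ℚ_p). Then with respect to the normalized Haar probability measure on SL₂(ℤ_p), the measure of the set {k ∈ SL₂(ℤ_p) : every entry of the matrix a_t·k·a_t^{−1} has p-adic norm at most p^r} is at most (p/(p+1))·p^{−(2t−r)}. -/

import Mathlib

open MeasureTheory
open scoped ENNReal

/-- The topology on `SL₂(ℤ_p)` induced from the (compact) space of `2×2` matrices
over `ℤ_p`. -/
noncomputable instance SL2Zp.topologicalSpace (p : ℕ) [Fact p.Prime] :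
    TopologicalSpace (Matrix.SpecialLinearGroup (Fin 2) ℤ_[p]) :=
  TopologicalSpace.induced (fun A => (A : Matrix (Fin 2) (Fin 2) ℤ_[p])) inferInstance

/-- The Borel σ-algebra on `SL₂(ℤ_p)`. -/
noncomputable instance SL2Zp.measurableSpace (p : ℕ) [Fact p.Prime] :
    MeasurableSpace (Matrix.SpecialLinearGroup (Fin 2) ℤ_[p]) := borel _

namespace SL2ZpAux

variable {p : ℕ} [Fact p.Prime]

instance : BorelSpace (Matrix.SpecialLinearGroup (Fin 2) ℤ_[p]) := ⟨rfl⟩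

lemma continuous_coe :
    Continuous (fun A : Matrix.SpecialLinearGroup (Fin 2) ℤ_[p] =>
      (A : Matrix (Fin 2) (Fin 2) ℤ_[p])) :=
  continuous_induced_dom

instance : ContinuousMul (Matrix.SpecialLinearGroup (Fin 2) ℤ_[p]) := by
  constructor
  apply continuous_induced_rng.2
  have h : ((fun A : Matrix.SpecialLinearGroup (Fin 2) ℤ_[p] =>
        (A : Matrix (Fin 2) (Fin 2) ℤ_[p])) ∘ fun q : Matrix.SpecialLinearGroup (Fin 2) ℤ_[p] ×
        Matrix.SpecialLinearGroup (Fin 2) ℤ_[p] => q.1 * q.2)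
      = fun q => (q.1 : Matrix (Fin 2) (Fin 2) ℤ_[p]) * (q.2 : Matrix (Fin 2) (Fin 2) ℤ_[p]) := by
    funext q; exact Matrix.SpecialLinearGroup.coe_mul _ _
  rw [h]
  exact (continuous_coe.comp continuous_fst).matrix_mul (continuous_coe.comp continuous_snd)

/-- The key subgroup-like set. -/
def badSet (p : ℕ) [Fact p.Prime] (n : ℕ) : Set (Matrix.SpecialLinearGroup (Fin 2) ℤ_[p]) :=
  {k | ‖(k : Matrix (Fin 2) (Fin 2) ℤ_[p]) 0 1‖ ≤ (p : ℝ) ^ (-(n : ℤ))}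

lemma isClosed_badSet (n : ℕ) : IsClosed (badSet p n) := by
  have hc : Continuous (fun k : Matrix.SpecialLinearGroup (Fin 2) ℤ_[p] =>
      ‖(k : Matrix (Fin 2) (Fin 2) ℤ_[p]) 0 1‖) :=
    (((continuous_apply (1 : Fin 2)).comp ((continuous_apply (0 : Fin 2)).comp
      continuous_coe))).norm
  exact IsClosed.preimage hc isClosed_Iic

lemma mem_badSet_iff_dvd {n : ℕ} {k : Matrix.SpecialLinearGroup (Fin 2) ℤ_[p]} :
    k ∈ badSet p n ↔ (p : ℤ_[p]) ^ n ∣ (k : Matrix (Fin 2) (Fin 2) ℤ_[p]) 0 1 := by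
  rw [badSet, Set.mem_setOf_eq, PadicInt.norm_le_pow_iff_mem_span_pow,
    Ideal.mem_span_singleton]

lemma entry_mul_inv (b a : Matrix.SpecialLinearGroup (Fin 2) ℤ_[p]) :
    ((b * a⁻¹ : Matrix.SpecialLinearGroup (Fin 2) ℤ_[p]) :
      Matrix (Fin 2) (Fin 2) ℤ_[p]) 0 1
      = (b : Matrix (Fin 2) (Fin 2) ℤ_[p]) 0 1 * (a : Matrix (Fin 2) (Fin 2) ℤ_[p]) 0 0
        - (b : Matrix (Fin 2) (Fin 2) ℤ_[p]) 0 0 * (a : Matrix (Fin 2) (Fin 2) ℤ_[p]) 0 1 := by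
  rw [Matrix.SpecialLinearGroup.coe_mul, Matrix.SpecialLinearGroup.coe_inv,
    Matrix.adjugate_fin_two]
  simp [Matrix.mul_apply, Fin.sum_univ_two]
  ring

lemma entry_inv_mul (x y : Matrix.SpecialLinearGroup (Fin 2) ℤ_[p]) :
    ((x⁻¹ * y : Matrix.SpecialLinearGroup (Fin 2) ℤ_[p]) :
      Matrix (Fin 2) (Fin 2) ℤ_[p]) 0 1
      = (x : Matrix (Fin 2) (Fin 2) ℤ_[p]) 1 1 * (y : Matrix (Fin 2) (Fin 2) ℤ_[p]) 0 1
        - (x : Matrix (Fin 2) (Fin 2) ℤ_[p]) 0 1 * (y : Matrix (Fin 2) (Fin 2) ℤ_[p]) 1 1 := by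
  rw [Matrix.SpecialLinearGroup.coe_mul, Matrix.SpecialLinearGroup.coe_inv,
    Matrix.adjugate_fin_two]
  simp [Matrix.mul_apply, Fin.sum_univ_two]
  ring

lemma mem_badSet_mul_inv {n : ℕ} {a b : Matrix.SpecialLinearGroup (Fin 2) ℤ_[p]}
    (ha : a ∈ badSet p n) (hb : b ∈ badSet p n) : b * a⁻¹ ∈ badSet p n := by
  rw [mem_badSet_iff_dvd] at ha hb ⊢
  rw [entry_mul_inv]
  exact dvd_sub (hb.mul_right _) (ha.mul_left _)

end SL2ZpAux

namespace SL2ZpAux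

variable {p : ℕ} [Fact p.Prime]

lemma zmod_eq_of_dvd {N : ℕ} [NeZero N] {a b : ZMod N}
    (h : (N : ℤ) ∣ (a.val : ℤ) - b.val) : a = b := by
  have h2 := (ZMod.intCast_zmod_eq_zero_iff_dvd _ N).2 h
  push_cast at h2
  rw [ZMod.natCast_val, ZMod.natCast_val, ZMod.cast_id, ZMod.cast_id, sub_eq_zero] at h2
  exact h2

/-- Unipotent representative. -/
noncomputable def repA (u : ℕ) : Matrix.SpecialLinearGroup (Fin 2) ℤ_[p] :=
  ⟨!![1, (u : ℤ_[p]); 0, 1], by simp [Matrix.det_fin_two_of]⟩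

/-- Representative of the other type. -/
noncomputable def repB (w : ℕ) : Matrix.SpecialLinearGroup (Fin 2) ℤ_[p] :=
  ⟨!![0, 1; -1, (p : ℤ_[p]) * w], by simp [Matrix.det_fin_two_of]⟩

@[simp] lemma repA_01 (u : ℕ) :
    ((repA u : Matrix.SpecialLinearGroup (Fin 2) ℤ_[p]) :
      Matrix (Fin 2) (Fin 2) ℤ_[p]) 0 1 = (u : ℤ_[p]) := rfl
@[simp] lemma repA_11 (u : ℕ) :
    ((repA u : Matrix.SpecialLinearGroup (Fin 2) ℤ_[p]) :
      Matrix (Fin 2) (Fin 2) ℤ_[p]) 1 1 = 1 := rfl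
@[simp] lemma repB_01 (w : ℕ) :
    ((repB w : Matrix.SpecialLinearGroup (Fin 2) ℤ_[p]) :
      Matrix (Fin 2) (Fin 2) ℤ_[p]) 0 1 = 1 := rfl
@[simp] lemma repB_11 (w : ℕ) :
    ((repB w : Matrix.SpecialLinearGroup (Fin 2) ℤ_[p]) :
      Matrix (Fin 2) (Fin 2) ℤ_[p]) 1 1 = (p : ℤ_[p]) * w := rfl

lemma not_p_dvd_one_sub (c : ℤ_[p]) : ¬ ((p : ℤ_[p]) ∣ 1 - (p : ℤ_[p]) * c) := by
  intro h
  have h1 : (p : ℤ_[p]) ∣ 1 := by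
    have := h.add (Dvd.intro c rfl)
    rwa [sub_add_cancel] at this
  have h2 : IsUnit (p : ℤ_[p]) := isUnit_of_dvd_one h1
  rw [PadicInt.isUnit_iff, PadicInt.norm_p, inv_eq_one] at h2
  have h3 : p = 1 := by exact_mod_cast h2
  exact (Fact.out (p := p.Prime)).one_lt.ne' h3

lemma dvd_int_of_dvd_sub {m : ℕ} {a b : ℕ}
    (h : (p : ℤ_[p]) ^ m ∣ (a : ℤ_[p]) - (b : ℤ_[p])) : (p ^ m : ℤ) ∣ (a : ℤ) - b := by
  rw [← PadicInt.pow_p_dvd_int_iff]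
  have : (((a : ℤ) - b : ℤ) : ℤ_[p]) = (a : ℤ_[p]) - (b : ℤ_[p]) := by push_cast; ring
  rw [this]
  exact h

lemma key_not_mem {n : ℕ} (hn : 1 ≤ n)
    [NeZero (p ^ n)] [NeZero (p ^ (n - 1))]
    (i j : ZMod (p ^ n) ⊕ ZMod (p ^ (n - 1))) (hij : i ≠ j) :
    ((Sum.elim (fun u : ZMod (p ^ n) => (repA u.val : Matrix.SpecialLinearGroup (Fin 2) ℤ_[p]))
        (fun w : ZMod (p ^ (n - 1)) => repB w.val) j)⁻¹ *
      (Sum.elim (fun u : ZMod (p ^ n) => repA u.val)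
        (fun w : ZMod (p ^ (n - 1)) => repB w.val) i)) ∉ badSet p n := by
  intro hmem
  rw [mem_badSet_iff_dvd, entry_inv_mul] at hmem
  have hpdvd : (p : ℤ_[p]) ∣ (p : ℤ_[p]) ^ n := dvd_pow_self _ (by omega)
  have hp0 : (p : ℤ_[p]) ≠ 0 := Nat.cast_ne_zero.mpr (Fact.out (p := p.Prime)).ne_zero
  rcases i with u | w <;> rcases j with u' | w' <;>
    simp only [Sum.elim_inl, Sum.elim_inr, repA_01, repA_11, repB_01, repB_11] at hmem
  · -- A A
    rw [one_mul, mul_one] at hmem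
    have h2 := dvd_int_of_dvd_sub hmem
    refine hij (congrArg Sum.inl (zmod_eq_of_dvd ?_))
    exact_mod_cast h2
  · -- i = A u, j = B w'
    have heq : (p : ℤ_[p]) * ↑w'.val * ↑u.val - 1 * 1
        = -(1 - (p : ℤ_[p]) * (↑w'.val * ↑u.val)) := by ring
    rw [heq, dvd_neg] at hmem
    exact not_p_dvd_one_sub _ (hpdvd.trans hmem)
  · -- i = B w, j = A u'
    have heq : (1 : ℤ_[p]) * 1 - ↑u'.val * ((p : ℤ_[p]) * ↑w.val)
        = 1 - (p : ℤ_[p]) * (↑u'.val * ↑w.val) := by ring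
    rw [heq] at hmem
    exact not_p_dvd_one_sub _ (hpdvd.trans hmem)
  · -- B B
    have heq : (p : ℤ_[p]) * ↑w'.val * 1 - 1 * ((p : ℤ_[p]) * ↑w.val)
        = (p : ℤ_[p]) * ((↑w'.val : ℤ_[p]) - ↑w.val) := by ring
    rw [heq] at hmem
    have hns : (p : ℤ_[p]) ^ n = (p : ℤ_[p]) * (p : ℤ_[p]) ^ (n - 1) := by
      rw [← pow_succ']
      congr 1
      omega
    rw [hns, mul_dvd_mul_iff_left hp0] at hmem
    have h2 := dvd_int_of_dvd_sub hmem
    refine hij (congrArg Sum.inr (zmod_eq_of_dvd ?_).symm)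
    exact_mod_cast h2

end SL2ZpAux

namespace SL2ZpAux

variable {p : ℕ} [Fact p.Prime]

lemma measure_badSet_le {n : ℕ} (hn : 1 ≤ n)
    (μ : Measure (Matrix.SpecialLinearGroup (Fin 2) ℤ_[p]))
    (hμ : μ.IsHaarMeasure) (hprob : IsProbabilityMeasure μ) :
    μ (badSet p n) ≤ ((p ^ n + p ^ (n - 1) : ℕ) : ℝ≥0∞)⁻¹ := by
  haveI := hμ.toIsMulLeftInvariant
  haveI : NeZero (p ^ n) := ⟨pow_ne_zero _ (Fact.out (p := p.Prime)).ne_zero⟩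
  haveI : NeZero (p ^ (n - 1)) := ⟨pow_ne_zero _ (Fact.out (p := p.Prime)).ne_zero⟩
  let g : ZMod (p ^ n) ⊕ ZMod (p ^ (n - 1)) → Matrix.SpecialLinearGroup (Fin 2) ℤ_[p] :=
    Sum.elim (fun u => repA u.val) (fun w => repB w.val)
  let T : ZMod (p ^ n) ⊕ ZMod (p ^ (n - 1)) → Set (Matrix.SpecialLinearGroup (Fin 2) ℤ_[p]) :=
    fun i => (fun k => (g i)⁻¹ * k) ⁻¹' badSet p n
  have hTm : ∀ i, MeasurableSet (T i) := fun i =>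
    (IsClosed.preimage (continuous_mul_left _) (isClosed_badSet n)).measurableSet
  have hTμ : ∀ i, μ (T i) = μ (badSet p n) := fun i => measure_preimage_mul μ _ _
  have hdisj : Pairwise (Function.onFun Disjoint T) := by
    intro i j hij
    rw [Function.onFun, Set.disjoint_left]
    intro k hki hkj
    have h1 : (g i)⁻¹ * g j ∈ badSet p n := by
      have h2 : (g i)⁻¹ * g j = ((g i)⁻¹ * k) * ((g j)⁻¹ * k)⁻¹ := by group
      rw [h2]
      exact mem_badSet_mul_inv hkj hki
    exact key_not_mem hn j i hij.symm h1
  have hsum : μ (⋃ i, T i) = ∑' i, μ (T i) := measure_iUnion hdisj hTm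
  have h1le : μ (⋃ i, T i) ≤ 1 :=
    le_trans (measure_mono (Set.subset_univ _)) measure_univ.le
  rw [hsum, tsum_fintype] at h1le
  simp only [hTμ] at h1le
  rw [Finset.sum_const, Finset.card_univ, Fintype.card_sum, ZMod.card, ZMod.card,
    nsmul_eq_mul] at h1le
  rw [ENNReal.le_inv_iff_mul_le, mul_comm]
  exact_mod_cast h1le

end SL2ZpAux

/-- Spherical measure estimate in the Bruhat–Tits tree (rank 3, `p`-adic case): for an odd
prime `p`, integers `t ≥ 1` and `0 ≤ r < 2t`, and `a_t = diag(p^{−t}, p^t)`, the Haar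
probability measure of the set of `k ∈ SL₂(ℤ_p)` all of whose conjugate's `a_t k a_t⁻¹`
entries have norm at most `p^r` is at most `(p/(p+1))·p^{−(2t−r)}`. -/
theorem haar_measure_conj_entries_le (p : ℕ) [Fact p.Prime] (hp : Odd p)
    (t r : ℤ) (ht : 1 ≤ t) (hr0 : 0 ≤ r) (hr : r < 2 * t)
    (μ : Measure (Matrix.SpecialLinearGroup (Fin 2) ℤ_[p]))
    (hμ : μ.IsHaarMeasure) (hprob : IsProbabilityMeasure μ) :
    μ {k : Matrix.SpecialLinearGroup (Fin 2) ℤ_[p] |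
        ∀ i j : Fin 2,
          ‖(Matrix.diagonal ![(p : ℚ_[p]) ^ (-t), (p : ℚ_[p]) ^ t] *
              (k : Matrix (Fin 2) (Fin 2) ℤ_[p]).map (fun x => (x : ℚ_[p])) *
              (Matrix.diagonal ![(p : ℚ_[p]) ^ (-t), (p : ℚ_[p]) ^ t])⁻¹) i j‖
            ≤ (p : ℝ) ^ r} ≤
      ENNReal.ofReal ((p / (p + 1) : ℝ) * (p : ℝ) ^ (-(2 * t - r))) := by
  have hpp : p.Prime := Fact.out
  have hp1 : (1:ℝ) < p := by exact_mod_cast hpp.one_lt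
  have hp0R : (0:ℝ) < p := lt_trans one_pos hp1
  have hpR : ((p : ℝ)) ≠ 0 := ne_of_gt hp0R
  set n : ℕ := (2*t - r).toNat with hn_def
  have hnt : (n : ℤ) = 2*t - r := Int.toNat_of_nonneg (by omega)
  have hn1 : 1 ≤ n := by omega
  have hpQ : ((p:ℚ_[p])) ≠ 0 := Nat.cast_ne_zero.mpr hpp.ne_zero
  -- inverse of the diagonal matrix
  have hDinv : (Matrix.diagonal ![(p : ℚ_[p]) ^ (-t), (p : ℚ_[p]) ^ t])⁻¹
      = Matrix.diagonal ![(p : ℚ_[p]) ^ t, (p : ℚ_[p]) ^ (-t)] := by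
    apply Matrix.inv_eq_right_inv
    ext i j
    fin_cases i <;> fin_cases j <;>
      simp [Matrix.mul_apply, Fin.sum_univ_two, Matrix.one_apply, zpow_neg,
        inv_mul_cancel₀ (zpow_ne_zero t hpQ), mul_inv_cancel₀ (zpow_ne_zero t hpQ)]
  -- entry formula
  have hentry : ∀ (k : Matrix.SpecialLinearGroup (Fin 2) ℤ_[p]) (i j : Fin 2),
      (Matrix.diagonal ![(p : ℚ_[p]) ^ (-t), (p : ℚ_[p]) ^ t] *
          (k : Matrix (Fin 2) (Fin 2) ℤ_[p]).map (fun x => (x : ℚ_[p])) *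
          (Matrix.diagonal ![(p : ℚ_[p]) ^ (-t), (p : ℚ_[p]) ^ t])⁻¹) i j
        = ![(p : ℚ_[p]) ^ (-t), (p : ℚ_[p]) ^ t] i *
            (((k : Matrix (Fin 2) (Fin 2) ℤ_[p]) i j : ℚ_[p])) *
            ![(p : ℚ_[p]) ^ t, (p : ℚ_[p]) ^ (-t)] j := by
    intro k i j
    rw [hDinv, Matrix.mul_diagonal, Matrix.diagonal_mul, Matrix.map_apply]
  have hnormp : ∀ s : ℤ, ‖(p:ℚ_[p])^s‖ = (p:ℝ)^(-s) := by
    intro s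
    rw [norm_zpow, Padic.norm_p, inv_zpow, ← zpow_neg]
  have hpt : (0:ℝ) < (p:ℝ)^t := zpow_pos hp0R t
  have h1r : (1:ℝ) ≤ (p:ℝ)^r := by
    have := zpow_le_zpow_right₀ (le_of_lt hp1) hr0
    simpa using this
  have hptn : (p:ℝ)^(-t) ≤ 1 := by
    have := zpow_le_zpow_right₀ (le_of_lt hp1) (by omega : -t ≤ 0)
    simpa using this
  have hptn0 : (0:ℝ) ≤ (p:ℝ)^(-t) := le_of_lt (zpow_pos hp0R _)
  have hb : ∀ (k : Matrix.SpecialLinearGroup (Fin 2) ℤ_[p]) (i j : Fin 2),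
      ‖(((k : Matrix (Fin 2) (Fin 2) ℤ_[p]) i j : ℚ_[p]))‖ ≤ 1 := fun k i j => by
    rw [← PadicInt.norm_def]; exact PadicInt.norm_le_one _
  have key : ∀ y : ℝ, ((p:ℝ)^t * y * (p:ℝ)^t ≤ (p:ℝ)^r ↔ y ≤ (p:ℝ)^(-(n:ℤ))) := by
    intro y
    rw [show (p:ℝ)^r = (p:ℝ)^t * (p:ℝ)^(-(n:ℤ)) * (p:ℝ)^t by
      rw [← zpow_add₀ hpR, ← zpow_add₀ hpR]; congr 1; omega]
    rw [mul_le_mul_iff_left₀ hpt, mul_le_mul_iff_right₀ hpt]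
  -- set identification
  have hset : {k : Matrix.SpecialLinearGroup (Fin 2) ℤ_[p] |
        ∀ i j : Fin 2,
          ‖(Matrix.diagonal ![(p : ℚ_[p]) ^ (-t), (p : ℚ_[p]) ^ t] *
              (k : Matrix (Fin 2) (Fin 2) ℤ_[p]).map (fun x => (x : ℚ_[p])) *
              (Matrix.diagonal ![(p : ℚ_[p]) ^ (-t), (p : ℚ_[p]) ^ t])⁻¹) i j‖
            ≤ (p : ℝ) ^ r} = SL2ZpAux.badSet p n := by
    ext k
    simp only [Set.mem_setOf_eq, SL2ZpAux.badSet]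
    constructor
    · intro h
      have h01 := h 0 1
      rw [hentry] at h01
      simp only [Matrix.cons_val_zero, Matrix.cons_val_one, Matrix.head_cons] at h01
      simp only [norm_mul, hnormp, neg_neg] at h01
      rw [PadicInt.norm_def]
      exact (key _).mp h01
    · intro h i j
      rw [PadicInt.norm_def] at h
      rw [hentry]
      fin_cases i <;> fin_cases j <;>
        simp only [Fin.mk_zero, Fin.mk_one, Matrix.cons_val_zero, Matrix.cons_val_one,
          Matrix.head_cons, norm_mul, hnormp, neg_neg]
      · -- (0,0) : p^t * ‖x‖ * p^(-t) ≤ p^r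
        calc (p:ℝ)^t * ‖(((k : Matrix (Fin 2) (Fin 2) ℤ_[p]) 0 0 : ℚ_[p]))‖ * (p:ℝ)^(-t)
            ≤ (p:ℝ)^t * 1 * (p:ℝ)^(-t) := by
              apply mul_le_mul_of_nonneg_right _ hptn0
              exact mul_le_mul_of_nonneg_left (hb k 0 0) (le_of_lt hpt)
          _ = 1 := by rw [mul_one, ← zpow_add₀ hpR]; simp
          _ ≤ (p:ℝ)^r := h1r
      · -- (0,1)
        exact (key _).mpr h
      ·
        calc (p:ℝ)^(-t) * ‖(((k : Matrix (Fin 2) (Fin 2) ℤ_[p]) 1 0 : ℚ_[p]))‖ * (p:ℝ)^(-t)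
            ≤ 1 * 1 * 1 := by
              apply mul_le_mul _ hptn (by positivity) (by norm_num)
              exact mul_le_mul hptn (hb k 1 0) (norm_nonneg _) (by norm_num)
          _ = 1 := by norm_num
          _ ≤ (p:ℝ)^r := h1r
      · -- (1,1)
        calc (p:ℝ)^(-t) * ‖(((k : Matrix (Fin 2) (Fin 2) ℤ_[p]) 1 1 : ℚ_[p]))‖ * (p:ℝ)^t
            ≤ (p:ℝ)^(-t) * 1 * (p:ℝ)^t := by
              apply mul_le_mul_of_nonneg_right _ (le_of_lt hpt)
              exact mul_le_mul_of_nonneg_left (hb k 1 1) hptn0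
          _ = 1 := by rw [mul_one, ← zpow_add₀ hpR]; simp
          _ ≤ (p:ℝ)^r := h1r
  rw [hset]
  refine le_trans (SL2ZpAux.measure_badSet_le hn1 μ hμ hprob) (le_of_eq ?_)
  -- final arithmetic
  obtain ⟨m, hm⟩ : ∃ m, n = m + 1 := ⟨n - 1, by omega⟩
  have hNpos : (0:ℝ) < ((p ^ n + p ^ (n-1) : ℕ) : ℝ) := by
    have h1 : 0 < p ^ n := pow_pos hpp.pos n
    have h2 : 0 < p ^ n + p ^ (n-1) := Nat.lt_of_lt_of_le h1 (Nat.le_add_right _ _)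
    exact_mod_cast h2
  have hval : ((p:ℝ)/(p+1)) * (p:ℝ)^(-(2*t-r)) = (((p ^ n + p ^ (n-1) : ℕ) : ℝ))⁻¹ := by
    rw [← hnt, hm]
    push_cast
    rw [show (-((m:ℤ)+1)) = -((m+1 : ℕ) : ℤ) by push_cast; ring, zpow_neg, zpow_natCast]
    have hden : ((p:ℝ)^(m+1) + (p:ℝ)^m) ≠ 0 := by positivity
    have hp1' : ((p:ℝ)+1) ≠ 0 := by positivity
    have hpow : ((p:ℝ)^(m+1)) ≠ 0 := by positivity
    field_simp
    ring
  rw [hval, ENNReal.ofReal_inv_of_pos hNpos, ENNReal.ofReal_natCast]
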